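/- For every real number θ, −2 ∫₀^θ log|2 sin t| dt = Σ_{n=1}^∞ sin(2nθ)/n². (In other words, the Bloch–Wigner dilogarithm of e^{2iθ}, given by the convergent series Σ_{n=1}^∞ sin(2nθ)/n², equals −2 times the integral of log|2 sin t| from 0 to θ.) -/

import Mathlib

open Real intervalIntegral MeasureTheory Set Filter Complex Topology

lemma logsin_periodic : Function.Periodic (fun t => Real.log |2 * Real.sin t|) π := by
  intro x
  simp [Real.sin_add_pi, abs_mul]

lemma logsin_even (x : ℝ) : Real.log |2 * Real.sin (-x)| = Real.log |2 * Real.sin x| := by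
  simp [Real.sin_neg, abs_mul]

lemma intInt_base : IntervalIntegrable (fun t => Real.log |2 * Real.sin t|) volume 0 (π/2) := by
  have hπ : (0:ℝ) < π / 2 := by positivity
  apply IntervalIntegrable.mono_fun'
    (g := fun t => Real.log 2 + 1 + 2 * t ^ (-(1/2) : ℝ))
  · exact (intervalIntegrable_const.add intervalIntegrable_const).add
      ((intervalIntegrable_rpow' (by norm_num)).const_mul 2)
  · exact (Real.measurable_log.comp ((measurable_const.mul Real.measurable_sin).abs)
      ).aestronglyMeasurable
  · rw [Filter.EventuallyLE, ae_restrict_iff' measurableSet_uIoc]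
    refine ae_of_all _ fun t ht => ?_
    rw [uIoc_of_le hπ.le] at ht
    obtain ⟨ht0, ht1⟩ := ht
    have hsinpos : 0 < Real.sin t := Real.sin_pos_of_pos_of_lt_pi ht0 (by
      have := Real.pi_pos; linarith)
    have htle : t ≤ 1 ∨ ¬ (t ≤ 1) := em _
    -- bounds on log sin t
    have hsin_le : Real.sin t ≤ t := Real.sin_le ht0.le
    have hsin_ge : 2 / π * t ≤ Real.sin t := Real.mul_le_sin ht0.le ht1
    have h2pi : (0:ℝ) < 2 / π := by positivity
    -- |log t| ≤ 2 * t^{-1/2} + 1  for 0 < t ≤ π/2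
    have hrpow_pos : (0:ℝ) < t ^ (-(1/2) : ℝ) := Real.rpow_pos_of_pos ht0 _
    have key : |Real.log (Real.sin t)| ≤ 2 * t ^ (-(1/2) : ℝ) + 1 := by
      rw [abs_le]
      constructor
      · -- lower bound : log sin t ≥ log (2/π * t) = log(2/π) + log t ≥ -1 - 2 t^{-1/2}
        have h1 : Real.log (2 / π * t) ≤ Real.log (Real.sin t) :=
          Real.log_le_log (by positivity) hsin_ge
        have h2 : Real.log (2/π * t) = Real.log (2/π) + Real.log t :=
          Real.log_mul (ne_of_gt h2pi) (ne_of_gt ht0)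
        have h3 : -1 ≤ Real.log (2/π) := by
          have hlogπ : Real.log π ≤ Real.log 4 := Real.log_le_log Real.pi_pos Real.pi_le_four
          have h4 : Real.log 4 = 2 * Real.log 2 := by
            rw [show (4:ℝ) = 2^2 by norm_num, Real.log_pow]; push_cast; ring
          have hl2 : Real.log 2 ≤ 1 := by
            have := Real.log_le_sub_one_of_pos (by norm_num : (0:ℝ)<2); linarith
          have hdiv : Real.log (2/π) = Real.log 2 - Real.log π :=
            Real.log_div (by norm_num) (ne_of_gt Real.pi_pos)
          linarith
        have h4 : -(2 * t ^ (-(1/2):ℝ)) ≤ Real.log t := by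
          rcases le_or_gt 1 t with h | h
          · have : (0:ℝ) ≤ Real.log t := Real.log_nonneg h
            linarith
          · -- 0 < t < 1 : -log t = log (1/t) = 2 log (1/√t) ≤ 2 (t^{-1/2} - 1)
            have hs : Real.log t = -(2 * Real.log (t ^ (-(1/2):ℝ))) := by
              rw [Real.log_rpow ht0]; ring
            have : Real.log (t ^ (-(1/2):ℝ)) ≤ t ^ (-(1/2):ℝ) - 1 :=
              Real.log_le_sub_one_of_pos hrpow_pos
            rw [hs]; nlinarith
        linarith
      · -- upper bound: log sin t ≤ log t ≤ log (π/2) ≤ 1 ≤ 2 t^{-1/2}+1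
        have h1 : Real.log (Real.sin t) ≤ Real.log t := Real.log_le_log hsinpos hsin_le
        have h2 : Real.log t ≤ Real.log (π/2) := Real.log_le_log ht0 ht1
        have h3 : Real.log (π/2) ≤ 1 := by
          have hπ4 : π / 2 ≤ 2 := by nlinarith [Real.pi_le_four]
          calc Real.log (π/2) ≤ Real.log 2 := Real.log_le_log hπ hπ4
            _ ≤ 1 := by
              have := Real.log_le_sub_one_of_pos (by norm_num : (0:ℝ) < 2); linarith
        nlinarith
    have habs : |2 * Real.sin t| = 2 * Real.sin t := abs_of_pos (by linarith)
    have hlog2 : Real.log |2 * Real.sin t| = Real.log 2 + Real.log (Real.sin t) := by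
      rw [habs, Real.log_mul (by norm_num) (ne_of_gt hsinpos)]
    show ‖Real.log |2 * Real.sin t|‖ ≤ Real.log 2 + 1 + 2 * t ^ (-(1/2) : ℝ)
    rw [Real.norm_eq_abs, hlog2]
    have := abs_add_le (Real.log 2) (Real.log (Real.sin t))
    have hl2 : |Real.log 2| = Real.log 2 := abs_of_nonneg (Real.log_nonneg (by norm_num))
    linarith [abs_le.mp key]

lemma intInt_all (a b : ℝ) :
    IntervalIntegrable (fun t => Real.log |2 * Real.sin t|) volume a b := by
  set f : ℝ → ℝ := fun t => Real.log |2 * Real.sin t| with hf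
  have h1 : IntervalIntegrable f volume (-(π/2)) 0 := by
    have := (IntervalIntegrable.iff_comp_neg).mp intInt_base
    simp only [neg_zero] at this
    have heq : (fun x => f (-x)) = f := funext fun x => logsin_even x
    rw [heq] at this
    exact this.symm
  have h2 : IntervalIntegrable f volume (-(π/2)) (π/2) := h1.trans intInt_base
  have hk : ∀ k : ℤ, IntervalIntegrable f volume (k*π - π/2) (k*π + π/2) := by
    intro k
    have := h2.comp_sub_right (k*π)
    have heq : (fun x => f (x - k*π)) = f := funext fun x =>
      (Function.Periodic.sub_int_mul_eq logsin_periodic k)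
    rw [heq] at this
    have e1 : -(π/2) + k*π = k*π - π/2 := by ring
    have e2 : π/2 + k*π = k*π + π/2 := by ring
    rwa [e1, e2] at this
  have step : ∀ N : ℕ, IntervalIntegrable f volume (-(N*π) - π/2) (N*π + π/2) := by
    intro N
    induction N with
    | zero => simpa using h2
    | succ n ih =>
      have hl : IntervalIntegrable f volume (-(((n:ℝ)+1)*π) - π/2) (-((n:ℝ)*π) - π/2) := by
        have := hk (-(n+1) : ℤ)
        have e1 : ((-(n+1) : ℤ) : ℝ)*π - π/2 = -(((n:ℝ)+1)*π) - π/2 := by push_cast; ring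
        have e2 : ((-(n+1) : ℤ) : ℝ)*π + π/2 = -((n:ℝ)*π) - π/2 := by push_cast; ring
        rwa [e1, e2] at this
      have hr : IntervalIntegrable f volume ((n:ℝ)*π + π/2) (((n:ℝ)+1)*π + π/2) := by
        have := hk ((n+1) : ℤ)
        have e1 : (((n+1) : ℤ) : ℝ)*π - π/2 = (n:ℝ)*π + π/2 := by push_cast; ring
        have e2 : (((n+1) : ℤ) : ℝ)*π + π/2 = ((n:ℝ)+1)*π + π/2 := by push_cast; ring
        rwa [e1, e2] at this
      have := (hl.trans (by exact_mod_cast ih)).trans hr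
      push_cast
      exact this
  obtain ⟨N, hN⟩ := exists_nat_ge (max |a| |b|)
  have hπ3 : (3:ℝ) < π := Real.pi_gt_three
  have hNle : (N:ℝ) ≤ (N:ℝ)*π + π/2 := by nlinarith [Nat.cast_nonneg (α := ℝ) N]
  have hmem : ∀ x : ℝ, |x| ≤ N → x ∈ Set.uIcc (-((N:ℝ)*π) - π/2) ((N:ℝ)*π + π/2) := by
    intro x hx
    rw [Set.uIcc_of_le (by nlinarith [Nat.cast_nonneg (α := ℝ) N])]
    constructor
    · have := abs_le.mp hx; linarith
    · have := abs_le.mp hx; linarith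
  refine (step N).mono_set ?_
  exact Set.uIcc_subset_uIcc (hmem a (le_trans (le_max_left _ _) hN))
    (hmem b (le_trans (le_max_right _ _) hN))

noncomputable def zf (r t : ℝ) : ℂ := (r:ℂ) * Complex.exp ((2*t:ℝ) * Complex.I)

lemma abs_zf (r t : ℝ) (hr : 0 ≤ r) : ‖zf r t‖ = r := by
  rw [zf, norm_mul, Complex.norm_real, Real.norm_eq_abs, Complex.norm_exp]
  have h0 : ((2*t:ℝ) * Complex.I).re = 0 := by simp
  rw [h0, Real.exp_zero, mul_one, _root_.abs_of_nonneg hr]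

lemma normSq_one_sub_zf (r t : ℝ) :
    Complex.normSq (1 - zf r t) = 1 - 2*r*Real.cos (2*t) + r^2 := by
  rw [zf, Complex.exp_mul_I, ← Complex.ofReal_cos, ← Complex.ofReal_sin]
  simp only [Complex.normSq_apply, Complex.sub_re, Complex.sub_im, Complex.one_re,
    Complex.one_im, Complex.mul_re, Complex.mul_im, Complex.add_re, Complex.add_im,
    Complex.ofReal_re, Complex.ofReal_im, Complex.mul_I_re, Complex.mul_I_im,
    Complex.I_re, Complex.I_im]
  nlinarith [Real.sin_sq_add_cos_sq (2*t)]

lemma one_sub_zf_ne {r : ℝ} (hr0 : 0 ≤ r) (hr1 : r < 1) (t : ℝ) :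
    ‖1 - zf r t‖ ≠ 0 := by
  intro h
  rw [norm_eq_zero, sub_eq_zero] at h
  have := abs_zf r t hr0
  rw [← h] at this
  simp at this
  exact absurd this.symm (ne_of_lt hr1)

lemma abs_one_sub_zf_one (t : ℝ) : ‖1 - zf 1 t‖ = 2 * |Real.sin t| := by
  have h : ‖1 - zf 1 t‖ ^ 2 = (2 * |Real.sin t|) ^ 2 := by
    rw [Complex.sq_norm, normSq_one_sub_zf]
    have h1 := Real.cos_two_mul t
    have h2 := Real.sin_sq_add_cos_sq t
    have h3 := _root_.sq_abs (Real.sin t)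
    nlinarith
  have ha : 0 ≤ ‖1 - zf 1 t‖ := norm_nonneg _
  have hb : 0 ≤ 2 * |Real.sin t| := by positivity
  calc ‖1 - zf 1 t‖ = Real.sqrt (‖1 - zf 1 t‖ ^ 2) :=
        (Real.sqrt_sq ha).symm
    _ = Real.sqrt ((2*|Real.sin t|)^2) := by rw [h]
    _ = 2 * |Real.sin t| := Real.sqrt_sq hb

lemma abs_one_sub_zf_ge {r : ℝ} (h2 : 1/2 ≤ r) (hr1 : r ≤ 1) (t : ℝ) :
    |Real.sin t| ≤ ‖1 - zf r t‖ := by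
  have hn : Real.sin t ^ 2 ≤ Complex.normSq (1 - zf r t) := by
    rw [normSq_one_sub_zf]
    have hc2 := Real.cos_two_mul t
    have hs := Real.sin_sq_add_cos_sq t
    nlinarith [sq_nonneg (1 - r), sq_nonneg (Real.cos t), Real.neg_one_le_cos (2*t)]
  calc |Real.sin t| = Real.sqrt (Real.sin t ^ 2) := (Real.sqrt_sq_eq_abs _).symm
    _ ≤ Real.sqrt (Complex.normSq (1 - zf r t)) := Real.sqrt_le_sqrt hn
    _ = ‖1 - zf r t‖ := (Complex.norm_def (1 - zf r t)).symm

lemma abs_one_sub_zf_le {r : ℝ} (hr0 : 0 ≤ r) (hr1 : r ≤ 1) (t : ℝ) :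
    ‖1 - zf r t‖ ≤ 2 := by
  calc ‖1 - zf r t‖ ≤ ‖(1:ℂ)‖ + ‖zf r t‖ := by
        simpa using norm_sub_le (1 : ℂ) (zf r t)
    _ = 1 + r := by rw [norm_one, abs_zf r t hr0]
    _ ≤ 2 := by linarith



lemma hasSum_r (θ : ℝ) {r : ℝ} (hr0 : 0 ≤ r) (hr1 : r < 1) :
    HasSum (fun n : ℕ => r^n * Real.sin (2*n*θ) / (2*(n:ℝ)^2))
      (∫ t in (0:ℝ)..θ, -Real.log (‖1 - zf r t‖)) := by
  have habs : ∀ t, ‖zf r t‖ = r := fun t => abs_zf r t hr0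
  have hlim : ∀ t : ℝ, HasSum (fun n : ℕ => ((zf r t)^n / n).re)
      (-Real.log (‖1 - zf r t‖)) := by
    intro t
    have h := Complex.hasSum_taylorSeries_neg_log (z := zf r t)
      (by rw [habs]; exact hr1)
    have := Complex.hasSum_re h
    simpa [Complex.log_re] using this
  have key : HasSum (fun n : ℕ => ∫ t in (0:ℝ)..θ, ((zf r t)^n / n).re)
      (∫ t in (0:ℝ)..θ, -Real.log (‖1 - zf r t‖)) := by
    apply intervalIntegral.hasSum_integral_of_dominated_convergence
      (bound := fun n _ => r^n)
    · intro n
      apply Continuous.aestronglyMeasurable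
      apply Complex.continuous_re.comp
      exact ((continuous_const.mul ((Complex.continuous_exp).comp
        ((Complex.continuous_ofReal.comp (continuous_const.mul continuous_id)).mul
          continuous_const))).pow n).div_const _
    · intro n
      refine ae_of_all _ fun t _ => ?_
      rcases n with _ | m
      · simp
      · have : ‖((zf r t)^(m+1) / (m+1:ℕ)).re‖ ≤ ‖(zf r t)^(m+1) / (m+1:ℕ)‖ :=
          Complex.abs_re_le_norm _
        refine this.trans ?_
        rw [norm_div, norm_pow, habs]
        simp only [Complex.norm_natCast]
        exact div_le_self (pow_nonneg hr0 _)
          (by exact_mod_cast Nat.succ_le_succ (Nat.zero_le m))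
    · exact ae_of_all _ fun t _ => summable_geometric_of_lt_one hr0 hr1
    · exact intervalIntegrable_const
    · exact ae_of_all _ fun t _ => hlim t
  convert key using 2 with n
  -- compute the integral of the n-th term
  have hterm : ∀ t : ℝ, ((zf r t)^n / n).re = (r^n/(n:ℝ)) * Real.cos (2*n*t) := by
    intro t
    have h1 : (zf r t)^n = ((r^n : ℝ) : ℂ) * Complex.exp (((2*n*t:ℝ)) * Complex.I) := by
      rw [zf, mul_pow, ← Complex.exp_nat_mul]
      push_cast
      ring_nf
    rw [h1]
    have : ((r^n : ℝ) : ℂ) * Complex.exp (((2*n*t:ℝ)) * Complex.I) / (n:ℂ)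
        = ((r^n/(n:ℝ) : ℝ) : ℂ) * Complex.exp (((2*n*t:ℝ)) * Complex.I) := by
      push_cast; ring
    rw [this, Complex.re_ofReal_mul, Complex.exp_ofReal_mul_I_re]
  simp_rw [hterm]
  rcases Nat.eq_zero_or_pos n with rfl | hn
  · simp
  · have hne : (2*(n:ℝ)) ≠ 0 := by positivity
    rw [intervalIntegral.integral_const_mul]
    rw [show (fun t => Real.cos (2*(n:ℝ)*t)) = (fun t => Real.cos ((2*(n:ℝ))*t)) from rfl]
    rw [intervalIntegral.integral_comp_mul_left (fun x => Real.cos x) hne]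
    rw [integral_cos]
    simp only [mul_zero, Real.sin_zero, sub_zero, smul_eq_mul]
    have hns : (n:ℝ) ≠ 0 := by positivity
    field_simp

lemma summable_bound : Summable (fun n : ℕ => 2/((n:ℝ)+1)^2) := by
  have h := Real.summable_one_div_nat_pow.mpr (by norm_num : 1 < 2)
  have h2 := (summable_nat_add_iff 1).mpr h
  have h3 : (fun n : ℕ => 2/((n:ℝ)+1)^2) = fun n : ℕ => 2 * (1/((n+1:ℕ):ℝ)^2) := by
    funext n; push_cast; ring
  rw [h3]
  exact h2.mul_left 2

lemma term_bound {r : ℝ} (hr0 : 0 ≤ r) (hr1 : r ≤ 1) (θ : ℝ) (n : ℕ) :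
    ‖r^n * Real.sin (2*n*θ) / (2*(n:ℝ)^2)‖ ≤ 2/((n:ℝ)+1)^2 := by
  rcases Nat.eq_zero_or_pos n with rfl | hn
  · simp
  · have h1 : (1:ℝ) ≤ (n:ℝ) := by exact_mod_cast hn
    rw [Real.norm_eq_abs, abs_div, abs_mul]
    have hrn : |r^n| ≤ 1 := by
      rw [_root_.abs_of_nonneg (pow_nonneg hr0 n)]
      exact pow_le_one₀ hr0 hr1
    have hsin : |Real.sin (2*n*θ)| ≤ 1 := Real.abs_sin_le_one _
    have hden : |2*(n:ℝ)^2| = 2*(n:ℝ)^2 := abs_of_pos (by positivity)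
    rw [hden, div_le_div_iff₀ (by positivity) (by positivity)]
    nlinarith [abs_nonneg (r^n), abs_nonneg (Real.sin (2*n*θ)),
      mul_le_one₀ hrn (abs_nonneg _) hsin]

/-- For every real `θ`, `−2 ∫₀^θ log|2 sin t| dt = Σ_{n=1}^∞ sin(2nθ)/n²`. -/
theorem bloch_wigner_integral_eq_tsum (θ : ℝ) :
    -2 * ∫ t in (0:ℝ)..θ, Real.log |2 * Real.sin t| =
      ∑' n : ℕ, Real.sin (2 * (n + 1) * θ) / ((n : ℝ) + 1) ^ 2 := by
  set l : Filter ℝ := nhdsWithin 1 (Set.Iio 1) with hl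
  set A : ℝ := ∫ t in (0:ℝ)..θ, Real.log |2 * Real.sin t| with hA
  have hsin_ae : ∀ᵐ t : ℝ, Real.sin t ≠ 0 := by
    have hc : Set.Countable {t : ℝ | Real.sin t = 0} := by
      have hsub : {t : ℝ | Real.sin t = 0} ⊆ Set.range (fun k : ℤ => (k:ℝ) * π) := by
        intro t ht
        obtain ⟨n, hn⟩ := Real.sin_eq_zero_iff.mp ht
        exact ⟨n, hn⟩
      exact (Set.countable_range _).mono hsub
    exact hc.ae_notMem volume
  -- limit of the integrals
  have hIone : Tendsto (fun r : ℝ => ∫ t in (0:ℝ)..θ, -Real.log (‖1 - zf r t‖)) l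
      (𝓝 (∫ t in (0:ℝ)..θ, -Real.log |2*Real.sin t|)) := by
    apply intervalIntegral.tendsto_integral_filter_of_dominated_convergence
      (bound := fun t => Real.log 2 + ‖Real.log |2*Real.sin t|‖)
    · filter_upwards [Ioo_mem_nhdsLT_of_mem
        (show (1:ℝ) ∈ Set.Ioc (0:ℝ) 1 by norm_num)] with r hr
      apply Continuous.aestronglyMeasurable
      apply Continuous.neg
      refine Continuous.log ?_ fun t => ?_
      · exact continuous_norm.comp (continuous_const.sub
          (continuous_const.mul (Complex.continuous_exp.comp
            ((Complex.continuous_ofReal.comp (continuous_const.mul continuous_id)).mul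
              continuous_const))))
      · exact one_sub_zf_ne hr.1.le hr.2 t
    · filter_upwards [Ioo_mem_nhdsLT_of_mem
        (show (1:ℝ) ∈ Set.Ioc (1/2:ℝ) 1 by norm_num)] with r hr
      filter_upwards [hsin_ae] with t hst _
      have hd_pos : 0 < ‖1 - zf r t‖ := by
        have h12 : (0:ℝ) ≤ r := by linarith [hr.1]
        exact lt_of_le_of_ne (norm_nonneg _) (Ne.symm (one_sub_zf_ne h12 hr.2 t))
      have hup : ‖1 - zf r t‖ ≤ 2 := abs_one_sub_zf_le (by linarith [hr.1]) hr.2.le t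
      have hlow : |Real.sin t| ≤ ‖1 - zf r t‖ := abs_one_sub_zf_ge hr.1.le hr.2.le t
      have hs_pos : 0 < |Real.sin t| := abs_pos.mpr hst
      have h2s : |2*Real.sin t| = 2*|Real.sin t| := by
        rw [abs_mul]; norm_num
      have h1 : Real.log (‖1 - zf r t‖) ≤ Real.log 2 := Real.log_le_log hd_pos hup
      have h2 : Real.log |Real.sin t| ≤ Real.log (‖1 - zf r t‖) :=
        Real.log_le_log hs_pos hlow
      have h3 : Real.log |2*Real.sin t| = Real.log 2 + Real.log |Real.sin t| := by
        rw [h2s, Real.log_mul two_ne_zero (ne_of_gt hs_pos)]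
      rw [Real.norm_eq_abs, Real.norm_eq_abs, abs_neg, abs_le]
      have hb := neg_abs_le (Real.log |2*Real.sin t|)
      have hb2 := le_abs_self (Real.log |2*Real.sin t|)
      constructor
      · linarith
      · have := Real.log_nonneg (by norm_num : (1:ℝ) ≤ 2)
        linarith [abs_nonneg (Real.log |2*Real.sin t|)]
    · simpa [Real.norm_eq_abs] using intervalIntegrable_const.add (intInt_all 0 θ).abs
    · filter_upwards [hsin_ae] with t hst _
      have hs_pos : 0 < |Real.sin t| := abs_pos.mpr hst
      have habs1 : ‖1 - zf 1 t‖ = 2 * |Real.sin t| := abs_one_sub_zf_one t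
      have hne : ‖1 - zf 1 t‖ ≠ 0 := by
        rw [habs1]; positivity
      have hca : ContinuousAt (fun r : ℝ => ‖1 - zf r t‖) 1 :=
        (continuous_norm.comp (continuous_const.sub
          ((Complex.continuous_ofReal).mul continuous_const))).continuousAt
      have hcont : ContinuousAt (fun r : ℝ => -Real.log (‖1 - zf r t‖)) 1 :=
        (hca.log hne).neg
      have hval : -Real.log (‖1 - zf 1 t‖) = -Real.log |2*Real.sin t| := by
        rw [habs1, abs_mul]
        norm_num
      have htd : Tendsto (fun r : ℝ => -Real.log (‖1 - zf r t‖)) l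
          (𝓝 (-Real.log (‖1 - zf 1 t‖))) :=
        hcont.tendsto.mono_left nhdsWithin_le_nhds
      rw [hval] at htd
      exact htd
  -- limit of the sums
  have hT : Tendsto (fun r : ℝ => ∑' n : ℕ, r^n * Real.sin (2*n*θ) / (2*(n:ℝ)^2)) l
      (𝓝 (∑' n : ℕ, Real.sin (2*n*θ) / (2*(n:ℝ)^2))) := by
    have := tendsto_tsum_of_dominated_convergence (𝓕 := l)
      (f := fun (r : ℝ) (n : ℕ) => r^n * Real.sin (2*n*θ) / (2*(n:ℝ)^2))
      (g := fun n : ℕ => Real.sin (2*n*θ) / (2*(n:ℝ)^2))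
      (bound := fun n : ℕ => 2/((n:ℝ)+1)^2) summable_bound ?_ ?_
    · exact this
    · intro n
      have hc : Continuous (fun r : ℝ => r^n * Real.sin (2*n*θ) / (2*(n:ℝ)^2)) := by
        continuity
      have htd : Tendsto (fun r : ℝ => r^n * Real.sin (2*n*θ) / (2*(n:ℝ)^2)) l
          (𝓝 ((1:ℝ)^n * Real.sin (2*n*θ) / (2*(n:ℝ)^2))) :=
        (hc.tendsto 1).mono_left nhdsWithin_le_nhds
      simpa using htd
    · filter_upwards [Ioo_mem_nhdsLT_of_mem
        (show (1:ℝ) ∈ Set.Ioc (0:ℝ) 1 by norm_num)] with r hr n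
      exact term_bound hr.1.le hr.2.le θ n
  -- identification along the filter
  have hEq : ∀ᶠ r in l, (∑' n : ℕ, r^n * Real.sin (2*n*θ) / (2*(n:ℝ)^2))
      = ∫ t in (0:ℝ)..θ, -Real.log (‖1 - zf r t‖) := by
    filter_upwards [Ioo_mem_nhdsLT_of_mem
      (show (1:ℝ) ∈ Set.Ioc (0:ℝ) 1 by norm_num)] with r hr
    exact (hasSum_r θ hr.1.le hr.2).tsum_eq
  have hT' : Tendsto (fun r : ℝ => ∫ t in (0:ℝ)..θ, -Real.log (‖1 - zf r t‖)) l
      (𝓝 (∑' n : ℕ, Real.sin (2*n*θ) / (2*(n:ℝ)^2))) := hT.congr' hEq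
  have hlne : l.NeBot := by
    rw [hl]
    exact nhdsLT_neBot 1
  have hkey : (∑' n : ℕ, Real.sin (2*n*θ) / (2*(n:ℝ)^2))
      = ∫ t in (0:ℝ)..θ, -Real.log |2*Real.sin t| := tendsto_nhds_unique hT' hIone
  have hInt : (∫ t in (0:ℝ)..θ, -Real.log |2*Real.sin t|) = -A := by
    rw [hA, ← intervalIntegral.integral_neg]
  rw [hInt] at hkey
  -- summability and reindexing
  have hsum : Summable (fun n : ℕ => Real.sin (2*n*θ) / (2*(n:ℝ)^2)) :=
    Summable.of_norm_bounded summable_bound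
      (fun n => by simpa using term_bound zero_le_one le_rfl θ n)
  have hzero : Real.sin (2*(0:ℕ)*θ) / (2*((0:ℕ):ℝ)^2) = 0 := by
    norm_num
  have hshift := Summable.tsum_eq_zero_add hsum
  rw [hzero, zero_add] at hshift
  rw [hshift] at hkey
  -- final algebra
  have hfin : (fun n : ℕ => Real.sin (2*(n+1)*θ) / ((n:ℝ)+1)^2)
      = fun n : ℕ => 2 * (Real.sin (2*((n+1:ℕ):ℝ)*θ) / (2*((n+1:ℕ):ℝ)^2)) := by
    funext n
    have h0 : ((n:ℝ)+1)^2 ≠ 0 := by positivity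
    push_cast
    field_simp
  rw [show (∑' n : ℕ, Real.sin (2 * ((n:ℝ) + 1) * θ) / ((n : ℝ) + 1) ^ 2)
      = ∑' n : ℕ, 2 * (Real.sin (2*((n+1:ℕ):ℝ)*θ) / (2*((n+1:ℕ):ℝ)^2)) from by
    exact congrArg tsum hfin]
  rw [tsum_mul_left, hkey]
  ring
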